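/- Let G(x) = μ_v/(N_v − x) for x ∈ [0, N_v) and F(x) = ∫₀^∞ (Λ(y₀)β(y₀)𝓕(y₀))/(β(y₀)x + μ) dy₀, where Λ, β, 𝓕 are nonnegative integrable/bounded functions, μ, μ_v, N_v > 0, and F(0) < ∞. Then G is strictly increasing with G(x) → ∞ as x → N_v⁻, F is nonincreasing, and the equation F(x) = G(x) has a solution x ∈ (0, N_v) if and only if F(0) > G(0), i.e., if and only if R₀ := (N_v/(μμ_v))∫₀^∞ Λ(y₀)β(y₀)𝓕(y₀)dy₀ > 1. -/

import Mathlib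

open MeasureTheory

/-- Existence of the single-strain endemic equilibrium: with
`G(x) = μ_v/(N_v − x)` and
`F(x) = ∫ Λβ𝓕/(βx+μ)`, the equation `F(x) = G(x)` has a solution in `(0, N_v)`
iff `R₀ = (N_v/(μμ_v))∫Λβ𝓕 > 1`; moreover `G` is strictly increasing and blows up at
`N_v⁻`, and `F` is nonincreasing. -/
theorem endemic_equilibrium_existence
    (μ μv Nv : ℝ) (hμ : 0 < μ) (hμv : 0 < μv) (hNv : 0 < Nv)
    (Λ β 𝓕 : ℝ → ℝ)
    (hΛ : ∀ y, 0 ≤ Λ y) (hβ : ∀ y, 0 ≤ β y) (h𝓕 : ∀ y, 0 ≤ 𝓕 y)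
    (hβbdd : ∃ M, ∀ y, β y ≤ M)
    (hmeas : Measurable Λ) (hmeasβ : Measurable β) (hmeas𝓕 : Measurable 𝓕)
    (hint : IntegrableOn (fun y₀ => Λ y₀ * β y₀ * 𝓕 y₀) (Set.Ioi 0)) :
    StrictMonoOn (fun x => μv / (Nv - x)) (Set.Ico 0 Nv) ∧
    Filter.Tendsto (fun x => μv / (Nv - x)) (nhdsWithin Nv (Set.Iio Nv))
      Filter.atTop ∧
    AntitoneOn (fun x => ∫ y₀ in Set.Ioi (0:ℝ),
      Λ y₀ * β y₀ * 𝓕 y₀ / (β y₀ * x + μ)) (Set.Ici 0) ∧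
    ((∃ x ∈ Set.Ioo 0 Nv,
        (∫ y₀ in Set.Ioi (0:ℝ), Λ y₀ * β y₀ * 𝓕 y₀ / (β y₀ * x + μ))
          = μv / (Nv - x)) ↔
      1 < (Nv / (μ * μv)) * ∫ y₀ in Set.Ioi (0:ℝ), Λ y₀ * β y₀ * 𝓕 y₀) := by
  have hnum : ∀ y, 0 ≤ Λ y * β y * 𝓕 y := fun y =>
    mul_nonneg (mul_nonneg (hΛ y) (hβ y)) (h𝓕 y)
  have hden : ∀ x : ℝ, 0 ≤ x → ∀ y, 0 < β y * x + μ := fun x hx y =>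
    add_pos_of_nonneg_of_pos (mul_nonneg (hβ y) hx) hμ
  -- integrability of the integrand for each x ≥ 0
  have hbound : IntegrableOn (fun y => Λ y * β y * 𝓕 y / μ) (Set.Ioi 0) :=
    hint.div_const μ
  have hintx : ∀ x : ℝ, 0 ≤ x →
      IntegrableOn (fun y => Λ y * β y * 𝓕 y / (β y * x + μ)) (Set.Ioi 0) := by
    intro x hx
    apply hbound.mono'
    · exact (((hmeas.mul hmeasβ).mul hmeas𝓕).div
        ((hmeasβ.mul_const x).add_const μ)).aestronglyMeasurable
    · refine Filter.Eventually.of_forall fun y => ?_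
      rw [Real.norm_eq_abs, abs_of_nonneg (div_nonneg (hnum y) (hden x hx y).le)]
      exact div_le_div_of_nonneg_left (hnum y) hμ
        (le_add_of_nonneg_left (mul_nonneg (hβ y) hx))
  -- G strictly increasing
  have hGmono : StrictMonoOn (fun x => μv / (Nv - x)) (Set.Ico 0 Nv) := by
    intro a ha b hb hab
    exact div_lt_div_of_pos_left hμv (sub_pos.2 hb.2) (by linarith)
  -- G blows up at Nv⁻
  have hGtend : Filter.Tendsto (fun x => μv / (Nv - x))
      (nhdsWithin Nv (Set.Iio Nv)) Filter.atTop := by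
    have h1 : Filter.Tendsto (fun x => Nv - x) (nhdsWithin Nv (Set.Iio Nv))
        (nhdsWithin 0 (Set.Ioi 0)) := by
      apply tendsto_nhdsWithin_of_tendsto_nhds_of_eventually_within
      · have : Filter.Tendsto (fun x : ℝ => Nv - x) (nhds Nv) (nhds (Nv - Nv)) :=
          (continuous_const.sub continuous_id).tendsto Nv
        simpa using this.mono_left nhdsWithin_le_nhds
      · exact eventually_nhdsWithin_of_forall fun x hx => Set.mem_Ioi.2 (sub_pos.2 hx)
    have h2 : Filter.Tendsto (fun x => (Nv - x)⁻¹)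
        (nhdsWithin Nv (Set.Iio Nv)) Filter.atTop :=
      tendsto_inv_nhdsGT_zero.comp h1
    simpa [div_eq_mul_inv] using (Filter.tendsto_const_mul_atTop_of_pos hμv).2 h2
  -- F antitone
  have hFanti : AntitoneOn (fun x => ∫ y₀ in Set.Ioi (0:ℝ),
      Λ y₀ * β y₀ * 𝓕 y₀ / (β y₀ * x + μ)) (Set.Ici 0) := by
    intro a ha b hb hab
    refine setIntegral_mono_on (hintx b hb) (hintx a ha) measurableSet_Ioi fun y _ => ?_
    exact div_le_div_of_nonneg_left (hnum y) (hden a ha y)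
      (by nlinarith [hβ y, mul_le_mul_of_nonneg_left hab (hβ y)])
  refine ⟨hGmono, hGtend, hFanti, ?_⟩
  set I : ℝ := ∫ y₀ in Set.Ioi (0:ℝ), Λ y₀ * β y₀ * 𝓕 y₀ with hI
  have hF0 : (∫ y₀ in Set.Ioi (0:ℝ), Λ y₀ * β y₀ * 𝓕 y₀ / (β y₀ * 0 + μ)) = I / μ := by
    simp only [mul_zero, zero_add]
    rw [hI, integral_div]
  have hiff : (μv / Nv < I / μ) ↔ 1 < (Nv / (μ * μv)) * I := by
    rw [div_lt_div_iff₀ hNv hμ, div_mul_eq_mul_div, lt_div_iff₀ (mul_pos hμ hμv), one_mul]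
    constructor <;> intro h <;> nlinarith
  constructor
  · rintro ⟨x, hx, heq⟩
    rw [← hiff]
    have h1 : μv / (Nv - 0) < μv / (Nv - x) :=
      hGmono ⟨le_refl 0, hNv⟩ ⟨hx.1.le, hx.2⟩ hx.1
    have h2 : (∫ y₀ in Set.Ioi (0:ℝ), Λ y₀ * β y₀ * 𝓕 y₀ / (β y₀ * x + μ))
        ≤ ∫ y₀ in Set.Ioi (0:ℝ), Λ y₀ * β y₀ * 𝓕 y₀ / (β y₀ * 0 + μ) :=
      hFanti Set.self_mem_Ici hx.1.le hx.1.le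
    rw [hF0] at h2
    rw [sub_zero] at h1
    calc μv / Nv < μv / (Nv - x) := h1
    _ = _ := heq.symm
    _ ≤ I / μ := h2
  · intro hR
    have hF0G0 : μv / Nv < ∫ y₀ in Set.Ioi (0:ℝ), Λ y₀ * β y₀ * 𝓕 y₀ / (β y₀ * 0 + μ) := by
      rw [hF0]; exact hiff.2 hR
    set F : ℝ → ℝ := fun x => ∫ y₀ in Set.Ioi (0:ℝ),
      Λ y₀ * β y₀ * 𝓕 y₀ / (β y₀ * x + μ) with hFdef
    -- choose c close to Nv with G c > F 0
    obtain ⟨c, hcF, hc0, hcNv⟩ :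
        ∃ c, F 0 < μv / (Nv - c) ∧ 0 < c ∧ c < Nv := by
      have h1 : ∀ᶠ x in nhdsWithin Nv (Set.Iio Nv), F 0 < μv / (Nv - x) :=
        hGtend.eventually_gt_atTop (F 0)
      have h2 : ∀ᶠ x in nhdsWithin Nv (Set.Iio Nv), x < Nv :=
        eventually_nhdsWithin_of_forall fun x hx => hx
      have h3 : ∀ᶠ x in nhdsWithin Nv (Set.Iio Nv), 0 < x :=
        eventually_nhdsWithin_of_eventually_nhds (eventually_gt_nhds hNv)
      obtain ⟨c, hc1, hc2, hc3⟩ := (h1.and (h2.and h3)).exists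
      exact ⟨c, hc1, hc3, hc2⟩
    -- continuity of F - G on [0, c]
    have hFcont : ContinuousOn F (Set.Icc 0 c) := by
      apply continuousOn_of_dominated
        (bound := fun y => Λ y * β y * 𝓕 y / μ)
      · intro x hx
        exact (((hmeas.mul hmeasβ).mul hmeas𝓕).div
          ((hmeasβ.mul_const x).add_const μ)).aestronglyMeasurable
      · intro x hx
        refine Filter.Eventually.of_forall fun y => ?_
        rw [Real.norm_eq_abs, abs_of_nonneg (div_nonneg (hnum y) (hden x hx.1 y).le)]
        exact div_le_div_of_nonneg_left (hnum y) hμ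
          (le_add_of_nonneg_left (mul_nonneg (hβ y) hx.1))
      · exact hbound
      · refine Filter.Eventually.of_forall fun y => ?_
        apply ContinuousOn.div continuousOn_const
          ((continuous_const.mul continuous_id).add continuous_const).continuousOn
        exact fun x hx => (hden x hx.1 y).ne'
    have hGcont : ContinuousOn (fun x => μv / (Nv - x)) (Set.Icc 0 c) := by
      apply ContinuousOn.div continuousOn_const
        (continuous_const.sub continuous_id).continuousOn
      intro x hx
      have : x < Nv := lt_of_le_of_lt hx.2 hcNv
      exact (sub_pos.2 this).ne'
    have hHcont : ContinuousOn (fun x => F x - μv / (Nv - x)) (Set.Icc 0 c) :=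
      hFcont.sub hGcont
    have hH0 : 0 < F 0 - μv / (Nv - 0) := by
      rw [sub_zero]
      exact sub_pos.2 hF0G0
    have hHc : F c - μv / (Nv - c) < 0 := by
      have hFc : F c ≤ F 0 := hFanti Set.self_mem_Ici hc0.le hc0.le
      have := lt_of_le_of_lt hFc hcF
      linarith
    have hmem : (0:ℝ) ∈ Set.Ioo (F c - μv / (Nv - c)) (F 0 - μv / (Nv - 0)) :=
      ⟨hHc, hH0⟩
    obtain ⟨x, hx, hHx⟩ := intermediate_value_Ioo' hc0.le hHcont hmem
    refine ⟨x, ⟨hx.1, lt_trans hx.2 hcNv⟩, ?_⟩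
    have : F x = μv / (Nv - x) := by linarith [sub_eq_zero.mp hHx]
    exact this
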